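/- Let G be a finite group, p a prime, R = Z_(p), and let F be a family of p-subgroups of G. Suppose H ≤ G controls p-fusion in G. Then restriction M ↦ res^G_H M induces a bijection between the isomorphism classes of conjugation invariant right RΓ_G-modules and the isomorphism classes of conjugation invariant right RΓ_H-modules. -/

import Mathlib

open CategoryTheory CategoryTheory.Limits

namespace OrbitPaper

variable {G : Type} [Group G]

/-- The conjugate subgroup `gKg⁻¹`. -/
def conjSub (g : G) (K : Subgroup G) : Subgroup G :=
  K.map (MulAut.conj g).toMonoidHom

/-- A *family* of subgroups: a collection closed under conjugation and taking subgroups. -/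
def IsFamily (F : Set (Subgroup G)) : Prop :=
  (∀ K ∈ F, ∀ g : G, conjSub g K ∈ F) ∧ (∀ K ∈ F, ∀ L : Subgroup G, L ≤ K → L ∈ F)

/-- `Fix A B` is the set of cosets of `B` in `G` that are fixed by the left translation
action of `A`; it is in canonical bijection with the set of `G`-maps `G/A ⟶ G/B`. -/
def Fix (A B : Subgroup G) : Type :=
  {x : G ⧸ B // ∀ a ∈ A, a • x = x}

namespace Fix

variable {A B C D : Subgroup G}

/-- The action of a `G`-map `G/B ⟶ G/C` on cosets of `B`. -/
def ap (x : Fix B C) (y : G ⧸ B) : G ⧸ C :=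
  Quotient.liftOn' y (fun a => a • x.1) (by
    intro a b hab
    rw [QuotientGroup.leftRel_apply] at hab
    show a • x.1 = b • x.1
    conv_rhs => rw [show b = a * (a⁻¹ * b) by group]
    rw [mul_smul, x.2 _ hab])

@[simp] lemma ap_mk (x : Fix B C) (a : G) : x.ap ((a : G) : G ⧸ B) = a • x.1 := rfl

lemma ap_smul (x : Fix B C) (g : G) (y : G ⧸ B) : x.ap (g • y) = g • x.ap y := by
  induction y using Quotient.inductionOn' with
  | h a =>
    show x.ap (g • ((a : G) : G ⧸ B)) = g • x.ap ((a : G) : G ⧸ B)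
    rw [MulAction.Quotient.smul_mk, ap_mk, ap_mk, smul_eq_mul, mul_smul]

/-- Composition of `G`-maps between coset spaces. -/
def comp (f : Fix A B) (x : Fix B C) : Fix A C :=
  ⟨x.ap f.1, fun a ha => by rw [← ap_smul, f.2 a ha]⟩

/-- The identity `G`-map `G/A ⟶ G/A`. -/
def one (A : Subgroup G) : Fix A A :=
  ⟨((1 : G) : G ⧸ A), fun a ha => by
    show a • ((1 : G) : G ⧸ A) = _
    rw [MulAction.Quotient.smul_mk]
    exact (QuotientGroup.eq).2 (by simpa using ha)⟩

lemma ap_one (y : G ⧸ B) : (one B).ap y = y := by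
  induction y using Quotient.inductionOn' with
  | h a =>
    show (one B).ap ((a : G) : G ⧸ B) = _
    rw [ap_mk]
    show a • ((1 : G) : G ⧸ B) = _
    rw [MulAction.Quotient.smul_mk, smul_eq_mul, mul_one]

lemma ap_ap (g : Fix B C) (h : Fix C D) (y : G ⧸ B) :
    (g.comp h).ap y = h.ap (g.ap y) := by
  induction y using Quotient.inductionOn' with
  | h a =>
    show (g.comp h).ap ((a : G) : G ⧸ B) = h.ap ((g.ap ((a : G) : G ⧸ B)))
    rw [ap_mk, ap_mk, ap_smul]
    rfl

@[simp] lemma one_comp (x : Fix A B) : (one A).comp x = x := by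
  apply Subtype.ext
  show x.ap ((1 : G) : G ⧸ A) = x.1
  rw [ap_mk, one_smul]

@[simp] lemma comp_one (f : Fix A B) : f.comp (one B) = f :=
  Subtype.ext (ap_one f.1)

lemma comp_assoc (f : Fix A B) (g : Fix B C) (h : Fix C D) :
    (f.comp g).comp h = f.comp (g.comp h) :=
  Subtype.ext (ap_ap g h f.1).symm

end Fix

/-- The orbit category `Or_F(G)`: objects are the subgroups in the family `F`
(representing the coset `G`-sets `G/H`), morphisms are the `G`-maps `G/H ⟶ G/K`. -/
structure Obj (G : Type) [Group G] (F : Set (Subgroup G)) : Type where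
  grp : Subgroup G
  mem : grp ∈ F

instance (F : Set (Subgroup G)) : Category (Obj G F) where
  Hom K L := Fix K.grp L.grp
  id K := Fix.one K.grp
  comp f g := f.comp g
  id_comp f := Fix.one_comp f
  comp_id f := Fix.comp_one f
  assoc f g h := Fix.comp_assoc f g h

/-- The category of (right) `RΓ_G`-modules: contravariant functors from the orbit
category `Or_F(G)` to `R`-modules. -/
abbrev OMod (G : Type) [Group G] (R : Type) [CommRing R] (F : Set (Subgroup G)) :=
  (Obj G F)ᵒᵖ ⥤ ModuleCat.{0} R

instance (R : Type) [CommRing R] (F : Set (Subgroup G)) :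
    HasFiniteBiproducts (OMod G R F) :=
  Abelian.hasFiniteBiproducts

variable (R : Type) [CommRing R]

/-- The `RΓ_G`-module `R[(G/L)^?]` sending `G/K` to the free `R`-module on the
`K`-fixed points of `G/L`.  For `L ∈ F` these are exactly the free modules `R[G/L^?]`. -/
noncomputable def stdMod (F : Set (Subgroup G)) (L : Subgroup G) : OMod G R F where
  obj K := ModuleCat.of R (Fix K.unop.grp L →₀ R)
  map {K K'} f := ModuleCat.ofHom (Finsupp.lmapDomain R R (fun x => Fix.comp f.unop x))
  map_id K := by
    have h : (fun x => Fix.comp (𝟙 K).unop x) = (id : Fix K.unop.grp L → Fix K.unop.grp L) :=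
      funext fun x => Fix.one_comp x
    show ModuleCat.ofHom (Finsupp.lmapDomain R R _) = _
    rw [h, Finsupp.lmapDomain_id]
    rfl
  map_comp {K K' K''} f g := by
    have h : (fun x : Fix K.unop.grp L => Fix.comp ((f ≫ g).unop) x) =
        (fun x : Fix K'.unop.grp L => Fix.comp g.unop x) ∘
          (fun x : Fix K.unop.grp L => Fix.comp f.unop x) :=
      funext fun x => (Fix.comp_assoc g.unop f.unop x)
    show ModuleCat.ofHom (Finsupp.lmapDomain R R _) = _
    rw [h, Finsupp.lmapDomain_comp]
    rfl

variable {R}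

/-- A finitely generated free `RΓ_G`-module: a finite direct sum of modules
`R[G/K^?]` with `K ∈ F`. -/
def IsFiniteFree {F : Set (Subgroup G)} (M : OMod G R F) : Prop :=
  ∃ (n : ℕ) (Ks : Fin n → Obj G F),
    Nonempty (M ≅ ⨁ (fun i => stdMod R F (Ks i).grp))

/-- A finitely generated projective `RΓ_G`-module: a direct summand (retract) of a
finitely generated free module. -/
def IsFGProjective {F : Set (Subgroup G)} (M : OMod G R F) : Prop :=
  ∃ N : OMod G R F, IsFiniteFree N ∧ ∃ (s : M ⟶ N) (r : N ⟶ M), s ≫ r = 𝟙 M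

/-- A finitely generated `RΓ_G`-module: admits an epimorphism from a finitely
generated free module. -/
def IsFG {F : Set (Subgroup G)} (M : OMod G R F) : Prop :=
  ∃ N : OMod G R F, IsFiniteFree N ∧ ∃ p : N ⟶ M, Epi p

/-- `P` is a projective resolution of `M` of length `≤ n`, by finitely generated
projective modules:  `0 → P_n → ⋯ → P_0 → M → 0` is exact. -/
def IsFiniteProjRes {F : Set (Subgroup G)} (M : OMod G R F)
    (P : ChainComplex (OMod G R F) ℕ)
    (π : P ⟶ (ChainComplex.single₀ (OMod G R F)).obj M) (n : ℕ) : Prop :=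
  (∀ i, IsFGProjective (P.X i)) ∧ (∀ i, i > n → IsZero (P.X i)) ∧ QuasiIso π

/-- `M` admits a finite projective resolution. -/
def HasFiniteProjRes {F : Set (Subgroup G)} (M : OMod G R F) : Prop :=
  ∃ P π n, IsFiniteProjRes M P π n


section Restriction

variable (H : Subgroup G)

/-- The family of subgroups of `H` induced by a family `F` of subgroups of `G`. -/
def fam (F : Set (Subgroup G)) : Set (Subgroup ↥H) :=
  {K : Subgroup ↥H | K.map H.subtype ∈ F}

/-- The canonical map `H/L → G/L`. -/
def push (L : Subgroup ↥H) : ↥H ⧸ L → G ⧸ (L.map H.subtype) :=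
  Quotient.map' Subtype.val (by
    intro a b hab
    rw [QuotientGroup.leftRel_apply] at hab ⊢
    exact ⟨a⁻¹ * b, hab, rfl⟩)

@[simp] lemma push_mk (L : Subgroup ↥H) (a : ↥H) :
    push H L ((a : ↥H) : ↥H ⧸ L) = ((a : G) : G ⧸ (L.map H.subtype)) := rfl

lemma push_smul (L : Subgroup ↥H) (h : ↥H) (y : ↥H ⧸ L) :
    push H L (h • y) = (h : G) • push H L y := by
  induction y using Quotient.inductionOn' with
  | h a =>
    show push H L (h • ((a : ↥H) : ↥H ⧸ L)) = (h : G) • push H L ((a : ↥H) : ↥H ⧸ L)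
    rw [MulAction.Quotient.smul_mk, push_mk, push_mk, MulAction.Quotient.smul_mk]
    rfl

lemma ap_push {L M : Subgroup ↥H} (g : Fix L M)
    (w : Fix (L.map H.subtype) (M.map H.subtype))
    (hw : w.1 = push H M g.1) (y : ↥H ⧸ L) :
    w.ap (push H L y) = push H M (g.ap y) := by
  induction y using Quotient.inductionOn' with
  | h a =>
    show w.ap (((a : G)) : G ⧸ (L.map H.subtype)) = push H M (g.ap ((a : ↥H) : ↥H ⧸ L))
    rw [Fix.ap_mk, Fix.ap_mk, hw, ← push_smul]

/-- The functor `Or_{F_H}(H) ⥤ Or_F(G)` sending `H/K` to `G/K`. -/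
def toG (F : Set (Subgroup G)) : Obj ↥H (fam H F) ⥤ Obj G F where
  obj K := ⟨K.grp.map H.subtype, K.mem⟩
  map {K L} f := ⟨push H L.grp f.1, by
    rintro g hg
    obtain ⟨k, hk, rfl⟩ := hg
    show ((k : ↥H) : G) • push H L.grp f.1 = push H L.grp f.1
    rw [← push_smul, f.2 k hk]⟩
  map_id K := Subtype.ext (by
    show push H K.grp (((1 : ↥H)) : ↥H ⧸ K.grp) = (((1 : G)) : G ⧸ _)
    rw [push_mk, OneMemClass.coe_one])
  map_comp {K L M} f g := Subtype.ext ((ap_push H g _ rfl f.1).symm)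

/-- The restriction functor `res^G_H` from `RΓ_G`-modules to `RΓ_H`-modules,
given by precomposition with `toG`. -/
def resF (R : Type) [CommRing R] (F : Set (Subgroup G)) (H : Subgroup G) :
    OMod G R F ⥤ OMod ↥H R (fam H F) :=
  (Functor.whiskeringLeft _ _ (ModuleCat.{0} R)).obj (toG H F).op

instance (R : Type) [CommRing R] (F : Set (Subgroup G)) (H : Subgroup G) :
    (resF R F H).Additive where
  map_add {X Y f g} := by
    ext K
    rfl

end Restriction

section Conjugation

lemma mem_normalizer_of_mem_centralizer {Q : Subgroup G} {c : G}
    (hc : c ∈ Subgroup.centralizer (Q : Set G)) : c ∈ Subgroup.normalizer (Q : Set G) := by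
  rw [Subgroup.mem_normalizer_iff]
  intro h
  constructor
  · intro hh
    have hcomm : h * c = c * h := Subgroup.mem_centralizer_iff.mp hc h hh
    have : c * h * c⁻¹ = h := by rw [← hcomm]; group
    rwa [this]
  · intro hh
    have hch : c * h * c⁻¹ ∈ Q := hh
    have hcomm : (c * h * c⁻¹) * c = c * (c * h * c⁻¹) :=
      Subgroup.mem_centralizer_iff.mp hc _ hch
    have h1 : c * h = (c * h * c⁻¹) * c := by group
    have h4 : c * h = c * (c * h * c⁻¹) := h1.trans hcomm
    have h5 : h = c * h * c⁻¹ := mul_left_cancel h4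
    rw [h5]
    exact hch
    
/-- The endomorphism of `G/Q` in the orbit category determined by an element
`n` of the normalizer of `Q`; it sends `gQ` to `g n⁻¹ Q`. -/
def conjMor {F : Set (Subgroup G)} (Q : Obj G F) (n : G) (hn : n ∈ Subgroup.normalizer (Q.grp : Set G)) :
    Q ⟶ Q :=
  ⟨((n⁻¹ : G) : G ⧸ Q.grp), fun q hq => by
    show q • (((n⁻¹ : G)) : G ⧸ Q.grp) = _
    rw [MulAction.Quotient.smul_mk, smul_eq_mul]
    refine (QuotientGroup.eq).2 ?_
    have : (q * n⁻¹)⁻¹ * n⁻¹ = n * q⁻¹ * n⁻¹ := by group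
    rw [this]
    exact (Subgroup.mem_normalizer_iff.mp hn q⁻¹).mp (inv_mem hq)⟩

/-- An `RΓ_G`-module `M` is conjugation invariant if, for every `Q ∈ F`,
the centralizer `C_G(Q)` acts trivially on `M(Q)`. -/
def ConjInv {R : Type} [CommRing R] {F : Set (Subgroup G)} (M : OMod G R F) : Prop :=
  ∀ (Q : Obj G F) (c : G) (hc : c ∈ Subgroup.centralizer (Q.grp : Set G)),
    M.map (conjMor Q c (mem_normalizer_of_mem_centralizer hc)).op = 𝟙 (M.obj (Opposite.op Q))

/-- A subgroup `H` controls `p`-fusion in `G`. -/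
def ControlsPFusion (p : ℕ) (H : Subgroup G) : Prop :=
  ¬ (p ∣ H.index) ∧
    ∀ (Q : Subgroup G) (g : G), Q ≤ H → IsPGroup p ↥Q → conjSub g⁻¹ Q ≤ H →
      ∃ c ∈ Subgroup.centralizer (Q : Set G), ∃ h ∈ H, g = c * h

end Conjugation

section Chains

variable {F : Set (Subgroup G)}

/-- `(A) ≤ (B)` : some conjugate of `A` is contained in `B`. -/
def classLE (A B : Obj G F) : Prop := ∃ g : G, conjSub g A.grp ≤ B.grp

/-- `(A) < (B)` in the partial order of conjugacy classes of subgroups in `F`. -/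
def classLT (A B : Obj G F) : Prop := classLE A B ∧ ¬ classLE B A

/-- A strict chain `(K_0) < (K_1) < ⋯ < (K_l)` of conjugacy classes in `F`. -/
def IsStrictChain {l : ℕ} (c : Fin (l + 1) → Obj G F) : Prop :=
  ∀ i : Fin l, classLT (c i.castSucc) (c i.succ)

end Chains


section Local

lemma spanPrime (p : ℕ) (hp : p.Prime) : (Ideal.span {(p : ℤ)}).IsPrime := by
  rw [Ideal.span_singleton_prime (by exact_mod_cast hp.ne_zero)]
  exact Nat.prime_iff_prime_int.mp hp

/-- The ring `ℤ_(p)` of `p`-local integers. -/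
abbrev zloc (p : ℕ) (hp : p.Prime) : Type :=
  Localization (@Ideal.primeCompl ℤ _ (Ideal.span {(p : ℤ)}) (spanPrime p hp))

instance {R S : Type} [CommRing R] [CommRing S] (f : R →+* S) :
    (ModuleCat.extendScalars.{0,0,0} f).Additive := by
  letI : PreservesColimits (ModuleCat.extendScalars.{0,0,0} f) :=
    (ModuleCat.extendRestrictScalarsAdj f).leftAdjoint_preservesColimits
  letI := preservesBinaryBiproducts_of_preservesBinaryCoproducts
    (ModuleCat.extendScalars.{0,0,0} f)
  exact Functor.additive_of_preservesBinaryBiproducts _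

/-- The `p`-localization functor on `ℤΓ_G`-modules, applying `ℤ_(p) ⊗_ℤ -` objectwise. -/
noncomputable def locF (F : Set (Subgroup G)) (p : ℕ) (hp : p.Prime) :
    OMod G ℤ F ⥤ OMod G (zloc p hp) F :=
  (Functor.whiskeringRight _ _ _).obj (ModuleCat.extendScalars (algebraMap ℤ (zloc p hp)))

instance (F : Set (Subgroup G)) (p : ℕ) (hp : p.Prime) : (locF F p hp).Additive where
  map_add {X Y f g} := by
    refine NatTrans.ext (funext fun K => ?_)
    show (ModuleCat.extendScalars (algebraMap ℤ (zloc p hp))).map ((f + g).app K) = _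
    rw [NatTrans.app_add, Functor.map_add]
    rfl

end Local


instance hasExtOMod (R : Type) [CommRing R] (F : Set (Subgroup G)) :
    HasExt.{1} (OMod G R F) := by
  letI : HasDerivedCategory.{1} (OMod G R F) := HasDerivedCategory.standard _
  exact hasExt_of_hasDerivedCategory.{1} _

section Aux

variable {F : Set (Subgroup G)}

lemma hom_ext {A B : Obj G F} {f g : A ⟶ B} (h : f.1 = g.1) : f = g := Subtype.ext h

/-- Construct a morphism `G/A ⟶ G/B` from a group element conjugating `A` into `B`. -/
def mkHom (A B : Obj G F) (g : G) (h : ∀ q ∈ A.grp, g⁻¹ * q * g ∈ B.grp) : A ⟶ B :=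
  ⟨((g : G) : G ⧸ B.grp), fun q hq => by
    show q • ((g : G) : G ⧸ B.grp) = _
    rw [MulAction.Quotient.smul_mk, smul_eq_mul]
    refine (QuotientGroup.eq).2 ?_
    have : (q * g)⁻¹ * g = g⁻¹ * q⁻¹ * g := by group
    rw [this]
    exact h q⁻¹ (inv_mem hq)⟩

@[simp] lemma mkHom_fst (A B : Obj G F) (g : G) (h) :
    (mkHom A B g h).1 = ((g : G) : G ⧸ B.grp) := rfl

lemma hom_prop {A B : Obj G F} (f : A ⟶ B) {g : G} (hg : f.1 = ((g : G) : G ⧸ B.grp))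
    {q : G} (hq : q ∈ A.grp) : g⁻¹ * q * g ∈ B.grp := by
  have h2 := f.2 q⁻¹ (inv_mem hq)
  rw [hg] at h2
  have h3 : ((q⁻¹ * g : G) : G ⧸ B.grp) = ((g : G) : G ⧸ B.grp) := by
    rw [← h2]; rw [MulAction.Quotient.smul_mk, smul_eq_mul]
  have h4 := (QuotientGroup.eq).1 h3
  have : (q⁻¹ * g)⁻¹ * g = g⁻¹ * q * g := by group
  rwa [this] at h4

lemma exists_mkHom {A B : Obj G F} (f : A ⟶ B) :
    ∃ (g : G) (h : ∀ q ∈ A.grp, g⁻¹ * q * g ∈ B.grp), f = mkHom A B g h := by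
  obtain ⟨g, hg⟩ := QuotientGroup.mk_surjective f.1
  exact ⟨g, fun q hq => hom_prop f hg.symm hq, hom_ext hg.symm⟩

lemma mkHom_comp {A B C : Obj G F} (g₁ g₂ : G) (h₁ h₂ h₃) :
    mkHom A B g₁ h₁ ≫ mkHom B C g₂ h₂ = mkHom A C (g₁ * g₂) h₃ := by
  apply hom_ext
  show (mkHom B C g₂ h₂).ap ((g₁ : G) : G ⧸ B.grp) = _
  rw [Fix.ap_mk, mkHom_fst, mkHom_fst, MulAction.Quotient.smul_mk, smul_eq_mul]

lemma mkHom_congr {A B : Obj G F} {g g' : G} (hg : g = g') (h h') :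
    mkHom A B g h = mkHom A B g' h' := by subst hg; rfl

lemma mkHom_id (A : Obj G F) (h) : mkHom A A 1 h = 𝟙 A := by
  apply hom_ext
  show _ = ((1 : G) : G ⧸ A.grp)
  rw [mkHom_fst]

lemma conjMor_eq_mkHom {Q : Obj G F} (n : G) (hn : n ∈ Subgroup.normalizer (Q.grp : Set G)) (h) :
    conjMor Q n hn = mkHom Q Q n⁻¹ h := rfl

lemma conjMor_prop {Q : Obj G F} (n : G) (hn : n ∈ Subgroup.normalizer (Q.grp : Set G)) :
    ∀ q ∈ Q.grp, n⁻¹⁻¹ * q * n⁻¹ ∈ Q.grp := by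
  intro q hq
  rw [inv_inv]
  exact (Subgroup.mem_normalizer_iff.mp hn q).1 hq

/-- Isomorphism of objects of the orbit category induced by a conjugation. -/
def isoOfConj (A B : Obj G F) (g : G) (h₁ : ∀ q ∈ A.grp, g⁻¹ * q * g ∈ B.grp)
    (h₂ : ∀ q ∈ B.grp, g * q * g⁻¹ ∈ A.grp) : A ≅ B where
  hom := mkHom A B g h₁
  inv := mkHom B A g⁻¹ (by intro q hq; rw [inv_inv]; exact h₂ q hq)
  hom_inv_id := by
    rw [mkHom_comp g g⁻¹ _ _ (by intro q hq; simpa using hq),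
      mkHom_congr (show g * g⁻¹ = 1 by group) _ (by intro q hq; simpa using hq)]
    exact mkHom_id A _
  inv_hom_id := by
    rw [mkHom_comp g⁻¹ g _ _ (by intro q hq; simpa using hq),
      mkHom_congr (show g⁻¹ * g = 1 by group) _ (by intro q hq; simpa using hq)]
    exact mkHom_id B _

end Aux

section Aux2

variable {F : Set (Subgroup G)}

lemma mkHom_cent_cond {Q : Obj G F} {d : G}
    (hd : d ∈ Subgroup.centralizer (Q.grp : Set G)) :
    ∀ q ∈ Q.grp, d⁻¹ * q * d ∈ Q.grp := by
  intro q hq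
  have hcomm : q * d = d * q := Subgroup.mem_centralizer_iff.mp hd q hq
  have : d⁻¹ * q * d = q := by
    rw [mul_assoc, hcomm, ← mul_assoc, inv_mul_cancel, one_mul]
  rwa [this]

lemma mkHom_eq_of {A B : Obj G F} {g g' : G} (hgg' : g⁻¹ * g' ∈ B.grp) (h h') :
    mkHom A B g h = mkHom A B g' h' :=
  hom_ext ((QuotientGroup.eq).2 hgg')

lemma map_mkHom_cent {R : Type} [CommRing R] {M : OMod G R F} (hM : ConjInv M)
    (Q : Obj G F) (d : G) (hd : d ∈ Subgroup.centralizer (Q.grp : Set G)) (h) :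
    M.map (mkHom Q Q d h).op = 𝟙 _ := by
  have hd' : d⁻¹ ∈ Subgroup.centralizer (Q.grp : Set G) := inv_mem hd
  have hn : d⁻¹ ∈ Subgroup.normalizer (Q.grp : Set G) := mem_normalizer_of_mem_centralizer hd'
  have e : mkHom Q Q d h = conjMor Q d⁻¹ hn :=
    (mkHom_congr (inv_inv d).symm h (conjMor_prop d⁻¹ hn)).trans
      (conjMor_eq_mkHom d⁻¹ hn (conjMor_prop d⁻¹ hn)).symm
  rw [e]
  exact hM Q d⁻¹ hd'

lemma conjMor_as_mkHom {R : Type} [CommRing R] {M : OMod G R F}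
    (hM : ∀ (Q : Obj G F) (d : G), d ∈ Subgroup.centralizer (Q.grp : Set G) →
      ∀ h, M.map (mkHom Q Q d h).op = 𝟙 _) : ConjInv M := by
  intro Q c hc
  have h := conjMor_prop c (mem_normalizer_of_mem_centralizer hc)
  rw [conjMor_eq_mkHom c (mem_normalizer_of_mem_centralizer hc) h]
  exact hM Q c⁻¹ (inv_mem hc) h

/-- Commuting a centralizer morphism past an arbitrary morphism. -/
lemma swap_cent {A B : Obj G F} (f : A ⟶ B) (c : G)
    (hc : c ∈ Subgroup.centralizer (B.grp : Set G)) :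
    ∃ (d : G) (hd : d ∈ Subgroup.centralizer (A.grp : Set G)),
      f ≫ mkHom B B c (mkHom_cent_cond hc) = mkHom A A d (mkHom_cent_cond hd) ≫ f := by
  obtain ⟨g, hgc, rfl⟩ := exists_mkHom f
  refine ⟨g * c * g⁻¹, ?_, ?_⟩
  · rw [Subgroup.mem_centralizer_iff]
    intro q hq
    have hcomm : (g⁻¹ * q * g) * c = c * (g⁻¹ * q * g) :=
      Subgroup.mem_centralizer_iff.mp hc _ (hgc q hq)
    have e1 : q * (g * c * g⁻¹) = g * ((g⁻¹ * q * g) * c) * g⁻¹ := by group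
    have e2 : (g * c * g⁻¹) * q = g * (c * (g⁻¹ * q * g)) * g⁻¹ := by group
    rw [e1, hcomm, ← e2]
  · rw [mkHom_comp g c _ _ (by
      intro q hq
      have h1 := mkHom_cent_cond hc _ (hgc q hq)
      have : c⁻¹ * (g⁻¹ * q * g) * c = (g * c)⁻¹ * q * (g * c) := by group
      rwa [this] at h1),
      mkHom_comp (g * c * g⁻¹) g _ _ (by
      intro q hq
      have h1 : (g * c * g⁻¹)⁻¹ * q * (g * c * g⁻¹) ∈ A.grp := mkHom_cent_cond (by
        rw [Subgroup.mem_centralizer_iff]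
        intro x hx
        have hcomm : (g⁻¹ * x * g) * c = c * (g⁻¹ * x * g) :=
          Subgroup.mem_centralizer_iff.mp hc _ (hgc x hx)
        have e1 : x * (g * c * g⁻¹) = g * ((g⁻¹ * x * g) * c) * g⁻¹ := by group
        have e2 : (g * c * g⁻¹) * x = g * (c * (g⁻¹ * x * g)) * g⁻¹ := by group
        rw [e1, hcomm, ← e2]) q hq
      have h2 := hgc _ h1
      have : g⁻¹ * ((g * c * g⁻¹)⁻¹ * q * (g * c * g⁻¹)) * g
          = (g * c * g⁻¹ * g)⁻¹ * q * (g * c * g⁻¹ * g) := by group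
      rwa [this] at h2)]
    refine mkHom_eq_of ?_ _ _
    have : (g * c)⁻¹ * (g * c * g⁻¹ * g) = 1 := by group
    rw [this]; exact one_mem _

/-- Transporting a centralizer morphism along an isomorphism in the orbit category. -/
lemma iso_transport_cent {A B : Obj G F} (ψ : A ≅ B) (c : G)
    (hc : c ∈ Subgroup.centralizer (A.grp : Set G)) :
    ∃ (c' : G) (hc' : c' ∈ Subgroup.centralizer (B.grp : Set G)),
      ψ.inv ≫ mkHom A A c (mkHom_cent_cond hc) ≫ ψ.hom
        = mkHom B B c' (mkHom_cent_cond hc') := by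
  obtain ⟨d, hd, hsw⟩ := swap_cent ψ.inv c hc
  rw [reassoc_of% hsw, Iso.inv_hom_id, Category.comp_id]
  exact ⟨d, hd, rfl⟩

end Aux2

section Aux3

variable {F : Set (Subgroup G)} {H : Subgroup G}

lemma toG_obj_grp (A : Obj ↥H (fam H F)) :
    ((toG H F).obj A).grp = A.grp.map H.subtype := rfl

lemma coe_cond_toG {A B : Obj ↥H (fam H F)} {h : ↥H}
    (hcond : ∀ q ∈ A.grp, h⁻¹ * q * h ∈ B.grp) :
    ∀ q ∈ ((toG H F).obj A).grp, (h : G)⁻¹ * q * (h : G) ∈ ((toG H F).obj B).grp := by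
  rintro q ⟨a, ha, rfl⟩
  exact ⟨h⁻¹ * a * h, hcond a ha, rfl⟩

lemma toG_map_mkHom {A B : Obj ↥H (fam H F)} (h : ↥H)
    (hcond : ∀ q ∈ A.grp, h⁻¹ * q * h ∈ B.grp) :
    (toG H F).map (mkHom A B h hcond)
      = mkHom ((toG H F).obj A) ((toG H F).obj B) (h : G) (coe_cond_toG hcond) := by
  apply hom_ext
  show push H B.grp (mkHom A B h hcond).1 = _
  rw [mkHom_fst, push_mk, mkHom_fst]
  rfl

lemma push_inj (K : Subgroup ↥H) : Function.Injective (push H K) := by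
  intro x y hxy
  induction x using Quotient.inductionOn' with
  | h a =>
    induction y using Quotient.inductionOn' with
    | h b =>
      have hxy' : (((a : G)) : G ⧸ K.map H.subtype) = ((b : G) : G ⧸ K.map H.subtype) := hxy
      have h1 : ((a : G))⁻¹ * (b : G) ∈ K.map H.subtype := (QuotientGroup.eq).1 hxy'
      have h2 : ((a⁻¹ * b : ↥H) : G) ∈ K.map H.subtype := h1
      have h3 : a⁻¹ * b ∈ K :=
        (Subgroup.mem_map_iff_mem (Subgroup.subtype_injective H)).1 h2
      exact (QuotientGroup.eq).2 h3

lemma coe_mem_cent_toG {A : Obj ↥H (fam H F)} {c : ↥H}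
    (hc : c ∈ Subgroup.centralizer (A.grp : Set ↥H)) :
    (c : G) ∈ Subgroup.centralizer ((((toG H F).obj A).grp : Subgroup G) : Set G) := by
  rw [Subgroup.mem_centralizer_iff]
  rintro q ⟨a, ha, rfl⟩
  have := Subgroup.mem_centralizer_iff.mp hc a ha
  exact congrArg (Subtype.val) this

lemma mem_cent_of_coe {A : Obj ↥H (fam H F)} {c : ↥H}
    (hc : (c : G) ∈ Subgroup.centralizer ((((toG H F).obj A).grp : Subgroup G) : Set G)) :
    c ∈ Subgroup.centralizer (A.grp : Set ↥H) := by
  rw [Subgroup.mem_centralizer_iff]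
  intro a ha
  have := Subgroup.mem_centralizer_iff.mp hc (a : G) ⟨a, ha, rfl⟩
  exact Subtype.ext this

/-- Every object of `Or_F(G)` is isomorphic to one coming from `Or_{F_H}(H)`,
when `F` consists of `p`-groups and `p ∤ [G:H]`. -/
lemma ess_surj [Fintype G] {p : ℕ} (hp : p.Prime) (hF : IsFamily F) (hFp : ∀ K ∈ F, IsPGroup p ↥K)
    (hind : ¬ p ∣ H.index) (Q : Obj G F) :
    ∃ Q' : Obj ↥H (fam H F), Nonempty (Q ≅ (toG H F).obj Q') := by
  haveI : Fact p.Prime := ⟨hp⟩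
  have hQp : IsPGroup p ↥Q.grp := hFp _ Q.mem
  have hcard : ¬ p ∣ Nat.card (G ⧸ H) := by rwa [← Subgroup.index_eq_card]
  obtain ⟨x, hx⟩ := hQp.nonempty_fixed_point_of_prime_not_dvd_card (G ⧸ H) hcard
  obtain ⟨g, rfl⟩ := QuotientGroup.mk_surjective x
  have hconj : ∀ q ∈ Q.grp, g⁻¹ * q * g ∈ H := by
    intro q hq
    have h1 : (⟨q⁻¹, inv_mem hq⟩ : ↥Q.grp) • ((g : G) : G ⧸ H) = ((g : G) : G ⧸ H) :=
      hx ⟨q⁻¹, inv_mem hq⟩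
    have h2 : ((q⁻¹ * g : G) : G ⧸ H) = ((g : G) : G ⧸ H) := by
      rw [← h1]
      show _ = (q⁻¹ : G) • ((g : G) : G ⧸ H)
      rw [MulAction.Quotient.smul_mk, smul_eq_mul]
    have h3 := (QuotientGroup.eq).1 h2
    have : (q⁻¹ * g)⁻¹ * g = g⁻¹ * q * g := by group
    rwa [this] at h3
  set P : Subgroup G := conjSub g⁻¹ Q.grp with hP
  have hconjP : ∀ q ∈ Q.grp, g⁻¹ * q * g ∈ P := by
    intro q hq
    refine ⟨q, hq, ?_⟩
    show g⁻¹ * q * g⁻¹⁻¹ = _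
    rw [inv_inv]
  have hmemP : ∀ x ∈ P, ∃ q ∈ Q.grp, x = g⁻¹ * q * g := by
    rintro x ⟨q, hq, rfl⟩
    exact ⟨q, hq, by show (MulAut.conj g⁻¹) q = _; rw [MulAut.conj_apply, inv_inv]⟩
  have hPF : P ∈ F := hF.1 Q.grp Q.mem g⁻¹
  have hPH : P ≤ H := by
    intro x hxP
    obtain ⟨q, hq, rfl⟩ := hmemP x hxP
    exact hconj q hq
  refine ⟨⟨P.comap H.subtype, ?_⟩, ?_⟩
  · show (P.comap H.subtype).map H.subtype ∈ F
    rwa [Subgroup.map_comap_eq, Subgroup.range_subtype, inf_eq_right.mpr hPH]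
  · set Q' : Obj ↥H (fam H F) := ⟨P.comap H.subtype, by
      show (P.comap H.subtype).map H.subtype ∈ F
      rwa [Subgroup.map_comap_eq, Subgroup.range_subtype, inf_eq_right.mpr hPH]⟩
    have hgrp : ((toG H F).obj Q').grp = P := by
      show (P.comap H.subtype).map H.subtype = P
      rw [Subgroup.map_comap_eq, Subgroup.range_subtype, inf_eq_right.mpr hPH]
    refine ⟨isoOfConj Q ((toG H F).obj Q') g ?_ ?_⟩
    · intro q hq
      rw [hgrp]
      exact hconjP q hq
    · intro q hq
      rw [hgrp] at hq
      obtain ⟨q₀, hq₀, rfl⟩ := hmemP q hq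
      have : g * (g⁻¹ * q₀ * g) * g⁻¹ = q₀ := by group
      rwa [this]

/-- Fullness modulo centralizers: control of fusion. -/
lemma full_exists {p : ℕ} (hFp : ∀ K ∈ F, IsPGroup p ↥K) (hH : ControlsPFusion p H)
    (A B : Obj ↥H (fam H F)) (w : (toG H F).obj A ⟶ (toG H F).obj B) :
    ∃ (d : G) (hd : d ∈ Subgroup.centralizer ((((toG H F).obj A).grp : Subgroup G) : Set G))
      (f : A ⟶ B),
      w = mkHom _ _ d (mkHom_cent_cond hd) ≫ (toG H F).map f := by
  obtain ⟨g, hg, rfl⟩ := exists_mkHom w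
  have hAH : ((toG H F).obj A).grp ≤ H := Subgroup.map_subtype_le _
  have hBH : ((toG H F).obj B).grp ≤ H := Subgroup.map_subtype_le _
  have hApG : IsPGroup p ↥(((toG H F).obj A).grp) := hFp _ A.mem
  have hconj : conjSub g⁻¹ (((toG H F).obj A).grp) ≤ H := by
    rintro x ⟨q, hq, rfl⟩
    show g⁻¹ * q * g⁻¹⁻¹ ∈ H
    rw [inv_inv]
    exact hBH (hg q hq)
  obtain ⟨c, hc, h, hh, hgch⟩ := hH.2 (((toG H F).obj A).grp) g hAH hApG hconj
  have hfcond : ∀ a ∈ A.grp, (⟨h, hh⟩ : ↥H)⁻¹ * a * ⟨h, hh⟩ ∈ B.grp := by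
    intro a ha
    refine (Subgroup.mem_map_iff_mem (Subgroup.subtype_injective H)).1 ?_
    show h⁻¹ * (a : G) * h ∈ ((toG H F).obj B).grp
    have hca : (a : G) * c = c * (a : G) :=
      Subgroup.mem_centralizer_iff.mp hc (a : G) ⟨a, ha, rfl⟩
    have key : h⁻¹ * (a : G) * h = g⁻¹ * (a : G) * g := by
      rw [hgch]
      have e1 : (c * h)⁻¹ * (a : G) * (c * h) = h⁻¹ * (c⁻¹ * ((a : G) * c)) * h := by group
      rw [e1, hca]
      group
    rw [key]
    exact hg _ ⟨a, ha, rfl⟩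
  refine ⟨c, hc, mkHom A B ⟨h, hh⟩ hfcond, ?_⟩
  rw [toG_map_mkHom, mkHom_comp c h _ _ (by
    intro q hq
    have h1 := hg q hq
    rwa [hgch] at h1)]
  refine mkHom_eq_of ?_ _ _
  have e : (c * h)⁻¹ * (c * h) = 1 := by group
  rw [hgch, e]
  exact one_mem _

end Aux3

section Extend

variable {R : Type} [CommRing R] {F : Set (Subgroup G)} {H : Subgroup G} {p : ℕ}

lemma mkHom_inj {A B : Obj G F} {g g' : G} {h h'}
    (heq : mkHom A B g h = mkHom A B g' h') : g⁻¹ * g' ∈ B.grp :=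
  (QuotientGroup.eq).1 (congrArg Subtype.val heq)

/-- The value of a conjugation invariant module on a morphism between objects
induced from `H`, via a chosen fusion factorization. -/
noncomputable def Lmap (hFp : ∀ K ∈ F, IsPGroup p ↥K) (hH : ControlsPFusion p H)
    (L : OMod ↥H R (fam H F)) {A B : Obj ↥H (fam H F)}
    (w : (toG H F).obj A ⟶ (toG H F).obj B) :
    L.obj (Opposite.op B) ⟶ L.obj (Opposite.op A) :=
  L.map ((full_exists hFp hH A B w).choose_spec.choose_spec.choose).op

lemma Lmap_eq (hFp : ∀ K ∈ F, IsPGroup p ↥K) (hH : ControlsPFusion p H)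
    (L : OMod ↥H R (fam H F)) (hL : ConjInv L) {A B : Obj ↥H (fam H F)}
    (w : (toG H F).obj A ⟶ (toG H F).obj B) (d : G)
    (hd : d ∈ Subgroup.centralizer ((((toG H F).obj A).grp : Subgroup G) : Set G))
    (f : A ⟶ B) (hw : w = mkHom _ _ d (mkHom_cent_cond hd) ≫ (toG H F).map f) :
    Lmap hFp hH L w = L.map f.op := by
  have hw₀ := (full_exists hFp hH A B w).choose_spec.choose_spec.choose_spec
  set d₀ := (full_exists hFp hH A B w).choose with hd₀def
  have hd₀ : d₀ ∈ Subgroup.centralizer ((((toG H F).obj A).grp : Subgroup G) : Set G) :=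
    (full_exists hFp hH A B w).choose_spec.choose
  show L.map ((full_exists hFp hH A B w).choose_spec.choose_spec.choose).op = L.map f.op
  set f₀' := (full_exists hFp hH A B w).choose_spec.choose_spec.choose with hf0def
  obtain ⟨h₀, hc₀, hf₀⟩ := exists_mkHom f₀'
  obtain ⟨h₁, hc₁, hf₁⟩ := exists_mkHom f
  set e : G := d₀⁻¹ * d with he
  have heC : e ∈ Subgroup.centralizer ((((toG H F).obj A).grp : Subgroup G) : Set G) :=
    mul_mem (inv_mem hd₀) hd
  have key : (toG H F).map f₀'
      = mkHom _ _ e (mkHom_cent_cond heC) ≫ (toG H F).map f := by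
    have h1 : mkHom ((toG H F).obj A) ((toG H F).obj A) d₀⁻¹
          (mkHom_cent_cond (inv_mem hd₀)) ≫ (mkHom _ _ d₀ (mkHom_cent_cond hd₀)
            ≫ (toG H F).map f₀')
        = mkHom ((toG H F).obj A) ((toG H F).obj A) d₀⁻¹
          (mkHom_cent_cond (inv_mem hd₀)) ≫ (mkHom _ _ d (mkHom_cent_cond hd)
            ≫ (toG H F).map f) := by rw [← hw₀, ← hw]
    rw [← Category.assoc, ← Category.assoc,
      mkHom_comp d₀⁻¹ d₀ _ _ (fun q hq => by
        have : (d₀⁻¹ * d₀)⁻¹ * q * (d₀⁻¹ * d₀) = q := by group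
        rwa [this]),
      mkHom_comp d₀⁻¹ d _ _ (mkHom_cent_cond heC),
      mkHom_congr (show (d₀⁻¹ * d₀ : G) = 1 by group) _ (fun q hq => by simpa using hq),
      mkHom_id, Category.id_comp] at h1
    exact h1
  have cond3 : ∀ q ∈ ((toG H F).obj A).grp,
      (e * (h₁ : G))⁻¹ * q * (e * (h₁ : G)) ∈ ((toG H F).obj B).grp := by
    intro q hq
    have h1 := mkHom_cent_cond heC q hq
    have h2 := coe_cond_toG hc₁ _ h1
    have h3 : ((h₁ : G))⁻¹ * (e⁻¹ * q * e) * (h₁ : G)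
        = (e * (h₁ : G))⁻¹ * q * (e * (h₁ : G)) := by group
    rwa [h3] at h2
  rw [hf₀, hf₁, toG_map_mkHom, toG_map_mkHom, mkHom_comp e (h₁ : G) _ _ cond3] at key
  have k := mkHom_inj key
  have heH : e ∈ H := by
    have h4 := H.mul_mem (H.mul_mem h₀.2
      (Subgroup.map_subtype_le _ k)) (H.inv_mem h₁.2)
    have h5 : (h₀ : G) * ((h₀ : G)⁻¹ * (e * (h₁ : G))) * ((h₁ : G))⁻¹ = e := by group
    rwa [h5] at h4
  set c' : ↥H := ⟨e, heH⟩ with hc'def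
  have hc'H : c' ∈ Subgroup.centralizer (A.grp : Set ↥H) := mem_cent_of_coe heC
  have hk' : h₀⁻¹ * (c' * h₁) ∈ B.grp := by
    refine (Subgroup.mem_map_iff_mem (Subgroup.subtype_injective H)).1 ?_
    show ((h₀⁻¹ * (c' * h₁) : ↥H) : G) ∈ ((toG H F).obj B).grp
    have h6 : ((h₀⁻¹ * (c' * h₁) : ↥H) : G) = (h₀ : G)⁻¹ * (e * (h₁ : G)) := by
      push_cast; rfl
    rw [h6]; exact k
  have cond4 : ∀ q ∈ A.grp, (c' * h₁)⁻¹ * q * (c' * h₁) ∈ B.grp := by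
    intro q hq
    have h1 := hc₁ _ (mkHom_cent_cond hc'H q hq)
    have h2 : h₁⁻¹ * (c'⁻¹ * q * c') * h₁ = (c' * h₁)⁻¹ * q * (c' * h₁) := by group
    rwa [h2] at h1
  have hsplit : f₀' = mkHom A A c' (mkHom_cent_cond hc'H) ≫ f := by
    rw [hf₀, hf₁, mkHom_comp c' h₁ _ _ cond4]
    exact mkHom_eq_of hk' _ _
  rw [hsplit]
  have : (mkHom A A c' (mkHom_cent_cond hc'H) ≫ f).op
      = f.op ≫ (mkHom A A c' (mkHom_cent_cond hc'H)).op := rfl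
  rw [this, Functor.map_comp, map_mkHom_cent hL A c' hc'H, Category.comp_id]

lemma Lmap_toG (hFp : ∀ K ∈ F, IsPGroup p ↥K) (hH : ControlsPFusion p H)
    (L : OMod ↥H R (fam H F)) (hL : ConjInv L) {A B : Obj ↥H (fam H F)}
    (f : A ⟶ B) : Lmap hFp hH L ((toG H F).map f) = L.map f.op := by
  refine Lmap_eq hFp hH L hL _ 1 (one_mem _) f ?_
  rw [mkHom_congr rfl _ (fun q hq => by simpa using hq), mkHom_id, Category.id_comp]

lemma Lmap_id (hFp : ∀ K ∈ F, IsPGroup p ↥K) (hH : ControlsPFusion p H)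
    (L : OMod ↥H R (fam H F)) (hL : ConjInv L) (A : Obj ↥H (fam H F)) :
    Lmap hFp hH L (𝟙 ((toG H F).obj A)) = 𝟙 _ := by
  have h1 : (𝟙 ((toG H F).obj A)) = (toG H F).map (𝟙 A) := ((toG H F).map_id A).symm
  rw [h1, Lmap_toG hFp hH L hL]
  show L.map (𝟙 (Opposite.op A)) = _
  rw [L.map_id]

lemma Lmap_comp (hFp : ∀ K ∈ F, IsPGroup p ↥K) (hH : ControlsPFusion p H)
    (L : OMod ↥H R (fam H F)) (hL : ConjInv L) {A B C : Obj ↥H (fam H F)}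
    (w₁ : (toG H F).obj A ⟶ (toG H F).obj B) (w₂ : (toG H F).obj B ⟶ (toG H F).obj C) :
    Lmap hFp hH L (w₁ ≫ w₂) = Lmap hFp hH L w₂ ≫ Lmap hFp hH L w₁ := by
  obtain ⟨d₁, hd₁, f₁, h1⟩ := full_exists hFp hH A B w₁
  obtain ⟨d₂, hd₂, f₂, h2⟩ := full_exists hFp hH B C w₂
  obtain ⟨d₃, hd₃, hsw⟩ := swap_cent ((toG H F).map f₁) d₂ hd₂
  have hd₄ : d₁ * d₃ ∈ Subgroup.centralizer ((((toG H F).obj A).grp : Subgroup G) : Set G) :=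
    mul_mem hd₁ hd₃
  have hcomp : w₁ ≫ w₂ = mkHom _ _ (d₁ * d₃) (mkHom_cent_cond hd₄)
      ≫ (toG H F).map (f₁ ≫ f₂) := by
    rw [h1, h2, Category.assoc, reassoc_of% hsw, ← Category.assoc, ← Category.assoc,
      mkHom_comp d₁ d₃ _ _ (mkHom_cent_cond hd₄), (toG H F).map_comp, Category.assoc]
  rw [Lmap_eq hFp hH L hL _ _ hd₄ _ hcomp,
    Lmap_eq hFp hH L hL _ _ hd₁ _ h1, Lmap_eq hFp hH L hL _ _ hd₂ _ h2]
  have : (f₁ ≫ f₂).op = f₂.op ≫ f₁.op := rfl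
  rw [this, Functor.map_comp]

variable [Fintype G]

/-- A chosen object of `Or_{F_H}(H)` whose image is isomorphic to a given object. -/
noncomputable def sel (hp : p.Prime) (hF : IsFamily F)
    (hFp : ∀ K ∈ F, IsPGroup p ↥K) (hH : ControlsPFusion p H) (Q : Obj G F) :
    Obj ↥H (fam H F) :=
  (ess_surj hp hF hFp hH.1 Q).choose

/-- A chosen isomorphism to the selected object. -/
noncomputable def selIso (hp : p.Prime) (hF : IsFamily F)
    (hFp : ∀ K ∈ F, IsPGroup p ↥K) (hH : ControlsPFusion p H) (Q : Obj G F) :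
    Q ≅ (toG H F).obj (sel hp hF hFp hH Q) :=
  Classical.choice (ess_surj hp hF hFp hH.1 Q).choose_spec

/-- The extension of a conjugation invariant `RΓ_H`-module to an `RΓ_G`-module. -/
noncomputable def extMod (hp : p.Prime) (hF : IsFamily F)
    (hFp : ∀ K ∈ F, IsPGroup p ↥K) (hH : ControlsPFusion p H)
    (L : OMod ↥H R (fam H F)) (hL : ConjInv L) : OMod G R F where
  obj K := L.obj (Opposite.op (sel hp hF hFp hH K.unop))
  map {K K'} f := Lmap hFp hH L
    ((selIso hp hF hFp hH K'.unop).inv ≫ f.unop ≫ (selIso hp hF hFp hH K.unop).hom)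
  map_id K := by
    have h1 : (selIso hp hF hFp hH K.unop).inv ≫ (𝟙 K).unop
        ≫ (selIso hp hF hFp hH K.unop).hom = 𝟙 _ := by
      show (selIso hp hF hFp hH K.unop).inv ≫ 𝟙 _ ≫ (selIso hp hF hFp hH K.unop).hom = 𝟙 _
      rw [Category.id_comp, Iso.inv_hom_id]
    rw [h1, Lmap_id hFp hH L hL]
  map_comp {K K' K''} f g := by
    have h1 : (selIso hp hF hFp hH K''.unop).inv ≫ (f ≫ g).unop
          ≫ (selIso hp hF hFp hH K.unop).hom
        = ((selIso hp hF hFp hH K''.unop).inv ≫ g.unop ≫ (selIso hp hF hFp hH K'.unop).hom)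
          ≫ ((selIso hp hF hFp hH K'.unop).inv ≫ f.unop ≫ (selIso hp hF hFp hH K.unop).hom) := by
      show (selIso hp hF hFp hH K''.unop).inv ≫ (g.unop ≫ f.unop)
          ≫ (selIso hp hF hFp hH K.unop).hom = _
      simp only [Category.assoc, Iso.hom_inv_id_assoc]
    rw [h1, Lmap_comp hFp hH L hL]

end Extend

section Extend2

variable {R : Type} [CommRing R] {F : Set (Subgroup G)} {H : Subgroup G} {p : ℕ}

/-- Restriction preserves conjugation invariance. -/
lemma res_conjInv (M : OMod G R F) (hM : ConjInv M) :
    ConjInv ((resF R F H).obj M) := by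
  apply conjMor_as_mkHom
  intro Q d hd h
  show M.map ((toG H F).map (mkHom Q Q d h)).op = 𝟙 _
  rw [toG_map_mkHom]
  exact map_mkHom_cent hM _ (d : G) (coe_mem_cent_toG hd) _

variable [Fintype G]

lemma extMod_conjInv (hp : p.Prime) (hF : IsFamily F)
    (hFp : ∀ K ∈ F, IsPGroup p ↥K) (hH : ControlsPFusion p H)
    (L : OMod ↥H R (fam H F)) (hL : ConjInv L) :
    ConjInv (extMod hp hF hFp hH L hL) := by
  apply conjMor_as_mkHom
  intro Q d hd h
  show Lmap hFp hH L ((selIso hp hF hFp hH Q).inv ≫ mkHom Q Q d h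
    ≫ (selIso hp hF hFp hH Q).hom) = 𝟙 _
  rw [show mkHom Q Q d h = mkHom Q Q d (mkHom_cent_cond hd) from mkHom_congr rfl _ _]
  obtain ⟨c', hc', htr⟩ := iso_transport_cent (selIso hp hF hFp hH Q) d hd
  rw [htr]
  rw [Lmap_eq hFp hH L hL _ c' hc' (𝟙 _) (by rw [(toG H F).map_id, Category.comp_id])]
  show L.map (𝟙 (Opposite.op (sel hp hF hFp hH Q))) = _
  rw [L.map_id]

/-- The restriction of the extension is isomorphic to the original module. -/
noncomputable def resExtIso (hp : p.Prime) (hF : IsFamily F)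
    (hFp : ∀ K ∈ F, IsPGroup p ↥K) (hH : ControlsPFusion p H)
    (L : OMod ↥H R (fam H F)) (hL : ConjInv L) :
    (resF R F H).obj (extMod hp hF hFp hH L hL) ≅ L :=
  NatIso.ofComponents
    (fun X =>
      { hom := Lmap hFp hH L (selIso hp hF hFp hH ((toG H F).obj X.unop)).hom
        inv := Lmap hFp hH L (selIso hp hF hFp hH ((toG H F).obj X.unop)).inv
        hom_inv_id := by
          erw [← Lmap_comp hFp hH L hL, Iso.inv_hom_id, Lmap_id hFp hH L hL]; try rfl
        inv_hom_id := by
          erw [← Lmap_comp hFp hH L hL, Iso.hom_inv_id, Lmap_id hFp hH L hL]; try rfl })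
    (by
      intro X Y u
      show Lmap hFp hH L ((selIso hp hF hFp hH ((toG H F).obj Y.unop)).inv
            ≫ (toG H F).map u.unop ≫ (selIso hp hF hFp hH ((toG H F).obj X.unop)).hom)
          ≫ Lmap hFp hH L (selIso hp hF hFp hH ((toG H F).obj Y.unop)).hom
        = Lmap hFp hH L (selIso hp hF hFp hH ((toG H F).obj X.unop)).hom ≫ L.map u
      rw [← Lmap_comp hFp hH L hL, Iso.hom_inv_id_assoc, Lmap_comp hFp hH L hL,
        Lmap_toG hFp hH L hL]
      rfl)

/-- Restriction is injective on iso classes of conjugation invariant modules. -/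
lemma res_inj_iso (hp : p.Prime) (hF : IsFamily F)
    (hFp : ∀ K ∈ F, IsPGroup p ↥K) (hH : ControlsPFusion p H)
    (M M' : OMod G R F) (hM : ConjInv M) (hM' : ConjInv M')
    (e : (resF R F H).obj M ≅ (resF R F H).obj M') : Nonempty (M ≅ M') := by
  -- key: transported morphisms intertwine with `e`
  have key : ∀ (A B : Obj ↥H (fam H F)) (t : (toG H F).obj A ⟶ (toG H F).obj B),
      M.map t.op ≫ e.hom.app (Opposite.op A)
        = e.hom.app (Opposite.op B) ≫ M'.map t.op := by
    intro A B t
    obtain ⟨d, hd, f', hfac⟩ := full_exists hFp hH A B t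
    have hM1 : M.map t.op = M.map ((toG H F).map f').op := by
      rw [hfac]
      have : (mkHom _ _ d (mkHom_cent_cond hd) ≫ (toG H F).map f').op
          = ((toG H F).map f').op ≫ (mkHom _ _ d (mkHom_cent_cond hd)).op := rfl
      rw [this, Functor.map_comp, map_mkHom_cent hM _ d hd, Category.comp_id]
    have hM2 : M'.map t.op = M'.map ((toG H F).map f').op := by
      rw [hfac]
      have : (mkHom _ _ d (mkHom_cent_cond hd) ≫ (toG H F).map f').op
          = ((toG H F).map f').op ≫ (mkHom _ _ d (mkHom_cent_cond hd)).op := rfl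
      rw [this, Functor.map_comp, map_mkHom_cent hM' _ d hd, Category.comp_id]
    rw [hM1, hM2]
    exact e.hom.naturality f'.op
  refine ⟨NatIso.ofComponents (fun X =>
    (M.mapIso (selIso hp hF hFp hH X.unop).op).symm
      ≪≫ e.app (Opposite.op (sel hp hF hFp hH X.unop))
      ≪≫ M'.mapIso (selIso hp hF hFp hH X.unop).op) ?_⟩
  intro X Y u
  have main : ∀ (X' Y' : (Obj G F)ᵒᵖ) (u' : X' ⟶ Y'),
      M.map u' ≫ (M.map (selIso hp hF hFp hH Y'.unop).op.inv
          ≫ e.hom.app (Opposite.op (sel hp hF hFp hH Y'.unop))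
          ≫ M'.map (selIso hp hF hFp hH Y'.unop).op.hom)
        = (M.map (selIso hp hF hFp hH X'.unop).op.inv
          ≫ e.hom.app (Opposite.op (sel hp hF hFp hH X'.unop))
          ≫ M'.map (selIso hp hF hFp hH X'.unop).op.hom) ≫ M'.map u' := by
    intro X' Y' u'
    set Q := X'.unop
    set K := Y'.unop
    set f := u'.unop with hf
    set ψQ := selIso hp hF hFp hH Q
    set ψK := selIso hp hF hFp hH K
    set t : (toG H F).obj (sel hp hF hFp hH K) ⟶ (toG H F).obj (sel hp hF hFp hH Q) :=
      ψK.inv ≫ f ≫ ψQ.hom with ht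
    have e1 : M.map u' ≫ M.map ψK.op.inv = M.map ψQ.op.inv ≫ M.map t.op := by
      rw [← Functor.map_comp, ← Functor.map_comp]
      congr 1
      show f.op ≫ ψK.inv.op = ψQ.inv.op ≫ t.op
      rw [← op_comp, ← op_comp]
      congr 1
      rw [ht]
      simp
    have e2 : M'.map t.op ≫ M'.map ψK.op.hom = M'.map ψQ.op.hom ≫ M'.map u' := by
      rw [← Functor.map_comp, ← Functor.map_comp]
      congr 1
      show t.op ≫ ψK.hom.op = ψQ.hom.op ≫ f.op
      rw [← op_comp, ← op_comp]
      congr 1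
      rw [ht]
      simp
    calc M.map u' ≫ M.map ψK.op.inv ≫ e.hom.app (Opposite.op (sel hp hF hFp hH K))
          ≫ M'.map ψK.op.hom
        = (M.map u' ≫ M.map ψK.op.inv) ≫ e.hom.app (Opposite.op (sel hp hF hFp hH K))
          ≫ M'.map ψK.op.hom := by rfl
      _ = (M.map ψQ.op.inv ≫ M.map t.op) ≫ e.hom.app (Opposite.op (sel hp hF hFp hH K))
          ≫ M'.map ψK.op.hom := by erw [e1]
      _ = M.map ψQ.op.inv ≫ (M.map t.op ≫ e.hom.app (Opposite.op (sel hp hF hFp hH K)))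
          ≫ M'.map ψK.op.hom := by rfl
      _ = M.map ψQ.op.inv ≫ (e.hom.app (Opposite.op (sel hp hF hFp hH Q)) ≫ M'.map t.op)
          ≫ M'.map ψK.op.hom := by erw [key _ _ t]; rfl
      _ = M.map ψQ.op.inv ≫ e.hom.app (Opposite.op (sel hp hF hFp hH Q))
          ≫ (M'.map t.op ≫ M'.map ψK.op.hom) := by rfl
      _ = M.map ψQ.op.inv ≫ e.hom.app (Opposite.op (sel hp hF hFp hH Q))
          ≫ (M'.map ψQ.op.hom ≫ M'.map u') := by erw [e2]; rfl
      _ = (M.map ψQ.op.inv ≫ e.hom.app (Opposite.op (sel hp hF hFp hH Q))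
          ≫ M'.map ψQ.op.hom) ≫ M'.map u' := by rfl
  have h := main X Y u
  exact h

end Extend2

section FG

variable {R : Type} [CommRing R] {F : Set (Subgroup G)}

/-- The natural transformation `R[G/B^?] ⟶ M` determined by an element of `M(B)`. -/
noncomputable def elt2hom (M : OMod G R F) (B : Obj G F) (m : M.obj (Opposite.op B)) :
    stdMod R F B.grp ⟶ M where
  app K := ModuleCat.ofHom ((Finsupp.lift (M.obj K) R (Fix K.unop.grp B.grp))
    (fun w => M.map (show K.unop ⟶ B from w).op m))
  naturality {K K'} f := by
    refine ModuleCat.hom_ext (Finsupp.lhom_ext fun w r => ?_)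
    show (Finsupp.lift (M.obj K') R (Fix K'.unop.grp B.grp))
        (fun w => M.map (show K'.unop ⟶ B from w).op m)
        (Finsupp.lmapDomain R R (fun x => Fix.comp f.unop x) (Finsupp.single w r))
      = M.map f ((Finsupp.lift (M.obj K) R (Fix K.unop.grp B.grp))
        (fun w => M.map (show K.unop ⟶ B from w).op m) (Finsupp.single w r))
    rw [Finsupp.lmapDomain_apply, Finsupp.mapDomain_single]
    simp only [Finsupp.lift_apply, Finsupp.sum_single_index, zero_smul]
    have key : M.map ((f.unop ≫ (show K.unop ⟶ B from w)).op)
        = M.map ((show K.unop ⟶ B from w).op) ≫ M.map f := by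
      rw [op_comp, Functor.map_comp, Quiver.Hom.op_unop]
    show r • M.map ((f.unop ≫ (show K.unop ⟶ B from w)).op) m
      = M.map f (r • M.map ((show K.unop ⟶ B from w).op) m)
    rw [key, map_smul]
    rfl

lemma elt2hom_app_single (M : OMod G R F) (B : Obj G F) (m : M.obj (Opposite.op B))
    {K : (Obj G F)ᵒᵖ} (w : Fix K.unop.grp B.grp) (r : R) :
    (elt2hom M B m).app K (Finsupp.single w r)
      = r • M.map (show K.unop ⟶ B from w).op m := by
  show (Finsupp.lift (M.obj K) R (Fix K.unop.grp B.grp))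
      (fun w => M.map (show K.unop ⟶ B from w).op m) (Finsupp.single w r) = _
  simp only [Finsupp.lift_apply, Finsupp.sum_single_index, zero_smul]

lemma elt2hom_eval (M : OMod G R F) (B : Obj G F) (m : M.obj (Opposite.op B)) :
    (elt2hom M B m).app (Opposite.op B) (Finsupp.single (𝟙 B) 1) = m := by
  rw [elt2hom_app_single M B m (𝟙 B) 1, one_smul]
  show M.map (𝟙 (Opposite.op B)) m = m
  rw [M.map_id]
  rfl

lemma elt2hom_zero (M : OMod G R F) (B : Obj G F) : elt2hom M B 0 = 0 := by
  apply NatTrans.ext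
  funext K
  apply ModuleCat.hom_ext
  refine Finsupp.lhom_ext fun w r => ?_
  refine (elt2hom_app_single M B 0 w r).trans ?_
  simp; rfl

lemma elt2hom_comp {M T : OMod G R F} (B : Obj G F) (m : M.obj (Opposite.op B))
    (h : M ⟶ T) : elt2hom M B m ≫ h = elt2hom T B (h.app (Opposite.op B) m) := by
  apply NatTrans.ext
  funext K
  apply ModuleCat.hom_ext
  refine Finsupp.lhom_ext fun w r => ?_
  refine Eq.trans ?_ (elt2hom_app_single T B (h.app (Opposite.op B) m) w r).symm
  show h.app K ((elt2hom M B m).app K (Finsupp.single w r)) = _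
  refine Eq.trans (congrArg (fun z => h.app K z) (elt2hom_app_single M B m w r)) ?_
  refine Eq.trans (map_smul (h.app K).hom r _) ?_
  exact congrArg (fun z => r • z)
    (ConcreteCategory.congr_hom (h.naturality (show K.unop ⟶ B from w).op) m)

lemma hom_eq_elt2hom {M : OMod G R F} {B : Obj G F} (α : stdMod R F B.grp ⟶ M) :
    α = elt2hom M B (α.app (Opposite.op B) (Finsupp.single (𝟙 B) 1)) := by
  apply NatTrans.ext
  funext K
  apply ModuleCat.hom_ext
  refine Finsupp.lhom_ext fun w r => ?_
  refine Eq.trans ?_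
    (elt2hom_app_single M B (α.app (Opposite.op B) (Finsupp.single (𝟙 B) 1)) w r).symm
  set w' : K.unop ⟶ B := w with hw'
  have h1 : (stdMod R F B.grp).map w'.op (Finsupp.single (𝟙 B) r)
      = Finsupp.single w r := by
    show Finsupp.lmapDomain R R (fun x => Fix.comp w' x) (Finsupp.single (𝟙 B) r) = _
    rw [Finsupp.lmapDomain_apply, Finsupp.mapDomain_single]
    congr 1
    exact Fix.comp_one w'
  have h3 := ConcreteCategory.congr_hom (α.naturality w'.op) (Finsupp.single (𝟙 B) r)
  have h5 : Finsupp.single (𝟙 B) r = r • Finsupp.single (𝟙 B) (1 : R) := by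
    rw [Finsupp.smul_single, smul_eq_mul, mul_one]
  calc α.app K (Finsupp.single w r)
      = α.app K ((stdMod R F B.grp).map w'.op (Finsupp.single (𝟙 B) r)) := by rw [h1]
    _ = M.map w'.op (α.app (Opposite.op B) (Finsupp.single (𝟙 B) r)) := h3
    _ = M.map w'.op (α.app (Opposite.op B) (r • Finsupp.single (𝟙 B) (1 : R))) := by
        rw [← h5]
    _ = r • M.map w'.op (α.app (Opposite.op B) (Finsupp.single (𝟙 B) (1 : R))) := by
        exact (congrArg (fun z => M.map w'.op z) ((α.app (Opposite.op B)).hom.map_smul r _)).trans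
          ((M.map w'.op).hom.map_smul r _)

end FG

section FG2

variable {R : Type} [CommRing R] {F : Set (Subgroup G)} {H : Subgroup G} {p : ℕ}
variable [Fintype G]

lemma isFG_of_res (hp : p.Prime) (hF : IsFamily F) (hFp : ∀ K ∈ F, IsPGroup p ↥K)
    (hH : ControlsPFusion p H) (M : OMod G R F) (hM : ConjInv M)
    (L : OMod ↥H R (fam H F)) (eIso : (resF R F H).obj M ≅ L) (hLfg : IsFG L) :
    IsFG M := by
  obtain ⟨N, ⟨n, Ks, ⟨isoN⟩⟩, pL, hEpi⟩ := hLfg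
  haveI : Epi pL := hEpi
  set q : (⨁ fun i => stdMod R (fam H F) (Ks i).grp) ⟶ L := isoN.inv ≫ pL with hqdef
  haveI hqE : Epi q := epi_comp _ _
  set x : ∀ i : Fin n, L.obj (Opposite.op (Ks i)) := fun i =>
    (biproduct.ι (fun i' => stdMod R (fam H F) (Ks i').grp) i ≫ q).app
      (Opposite.op (Ks i)) (Finsupp.single (𝟙 (Ks i)) 1) with hxdef
  set m : ∀ i : Fin n, M.obj (Opposite.op ((toG H F).obj (Ks i))) := fun i =>
    eIso.inv.app (Opposite.op (Ks i)) (x i) with hmdef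
  refine ⟨⨁ fun i => stdMod R F ((toG H F).obj (Ks i)).grp,
    ⟨n, fun i => (toG H F).obj (Ks i), ⟨Iso.refl _⟩⟩,
    biproduct.desc (fun i => elt2hom M ((toG H F).obj (Ks i)) (m i)), ?_⟩
  refine Preadditive.epi_of_cancel_zero _ ?_
  intro T h hzero
  have hstep1 : ∀ i, h.app (Opposite.op ((toG H F).obj (Ks i))) (m i) = 0 := by
    intro i
    have h1 : elt2hom M ((toG H F).obj (Ks i)) (m i) ≫ h = 0 := by
      rw [← biproduct.ι_desc (fun i' => elt2hom M ((toG H F).obj (Ks i'))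
        (m i')) i, Category.assoc, hzero, comp_zero]
    rw [elt2hom_comp] at h1
    have h2 := congrArg (fun φ : _ ⟶ T => φ.app (Opposite.op ((toG H F).obj (Ks i)))
      (Finsupp.single (𝟙 ((toG H F).obj (Ks i))) (1 : R))) h1
    refine Eq.trans (elt2hom_eval T _ _).symm (h2.trans ?_)
    rfl
  set u : L ⟶ (resF R F H).obj T := eIso.inv ≫ (resF R F H).map h with hudef
  have hqu : q ≫ u = 0 := by
    apply biproduct.hom_ext'
    intro j
    rw [comp_zero, ← Category.assoc]
    have hj := hom_eq_elt2hom (biproduct.ι (fun i' => stdMod R (fam H F) (Ks i').grp) j ≫ q)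
    rw [hj, elt2hom_comp]
    have hval : u.app (Opposite.op (Ks j))
        ((biproduct.ι (fun i' => stdMod R (fam H F) (Ks i').grp) j ≫ q).app
          (Opposite.op (Ks j)) (Finsupp.single (𝟙 (Ks j)) 1)) = 0 :=
      hstep1 j
    rw [hval]
    exact elt2hom_zero _ _
  have hu0 : u = 0 := (cancel_epi q).mp (by rw [hqu, comp_zero])
  have hres0 : ∀ A : Obj ↥H (fam H F), h.app (Opposite.op ((toG H F).obj A)) = 0 := by
    intro A
    have h4 := congrArg (fun φ : L ⟶ (resF R F H).obj T => φ.app (Opposite.op A)) hu0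
    have h5 : eIso.inv.app (Opposite.op A) ≫ h.app (Opposite.op ((toG H F).obj A)) = 0 := by
      refine Eq.trans ?_ (h4.trans (by simp; rfl))
      rfl
    haveI : IsIso (eIso.inv.app (Opposite.op A)) := inferInstance
    exact (cancel_epi (eIso.inv.app (Opposite.op A))).mp (by erw [comp_zero]; exact h5)
  apply NatTrans.ext
  funext X
  show h.app X = 0
  set ψ := selIso hp hF hFp hH X.unop with hψ
  have hnat := h.naturality ψ.hom.op
  have hz : M.map ψ.hom.op ≫ h.app X = 0 := by
    refine hnat.trans ?_
    rw [hres0 (sel hp hF hFp hH X.unop), zero_comp]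
  have hid : M.map ψ.inv.op ≫ M.map ψ.hom.op = 𝟙 _ := by
    rw [← Functor.map_comp, ← op_comp, Iso.hom_inv_id, op_id, M.map_id]
  calc h.app X = (M.map ψ.inv.op ≫ M.map ψ.hom.op) ≫ h.app X := by
        rw [hid, Category.id_comp]
    _ = M.map ψ.inv.op ≫ (M.map ψ.hom.op ≫ h.app X) := by rw [Category.assoc]
    _ = M.map ψ.inv.op ≫ 0 := by rw [hz]
    _ = 0 := comp_zero

end FG2

end OrbitPaper

open OrbitPaper CategoryTheory CategoryTheory.Limits

/-- Let `p` be a prime, `R = ℤ_(p)`, `F` a family of `p`-subgroups,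
and suppose `H ≤ G` controls `p`-fusion in `G`.  Then `M ↦ res^G_H M` induces a bijection
between the isomorphism classes of conjugation invariant right `RΓ_G`-modules and the
isomorphism classes of conjugation invariant right `RΓ_H`-modules. -/
theorem statement12 (G : Type) [Group G] [Fintype G] (p : ℕ) (hp : p.Prime)
    (F : Set (Subgroup G)) (hF : IsFamily F) (hFp : ∀ K ∈ F, IsPGroup p ↥K)
    (H : Subgroup G) (hH : ControlsPFusion p H) :
    (∀ M : OMod G (zloc p hp) F, IsFG M → ConjInv M →
      ConjInv ((resF (zloc p hp) F H).obj M)) ∧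
    (∀ L : OMod ↥H (zloc p hp) (fam H F), IsFG L → ConjInv L →
      ∃ M : OMod G (zloc p hp) F, IsFG M ∧ ConjInv M ∧
        Nonempty ((resF (zloc p hp) F H).obj M ≅ L)) ∧
    (∀ M M' : OMod G (zloc p hp) F, IsFG M → IsFG M' → ConjInv M → ConjInv M' →
      Nonempty ((resF (zloc p hp) F H).obj M ≅ (resF (zloc p hp) F H).obj M') →
      Nonempty (M ≅ M')) := by
  refine ⟨?_, ?_, ?_⟩
  · intro M _ hM
    exact res_conjInv M hM
  · intro L hLfg hL
    exact ⟨extMod hp hF hFp hH L hL,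
      isFG_of_res hp hF hFp hH _ (extMod_conjInv hp hF hFp hH L hL) L
        (resExtIso hp hF hFp hH L hL) hLfg,
      extMod_conjInv hp hF hFp hH L hL, ⟨resExtIso hp hF hFp hH L hL⟩⟩
  · intro M M' _ _ hM hM' he
    obtain ⟨e⟩ := he
    exact res_inj_iso hp hF hFp hH M M' hM hM' e
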